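/- Let G be a finite graph and H a finite nonempty graph. Then Γ(G □ H) ≤ Δ(G) · 2^{Γ(H)−1} + Γ(H), where Δ(G) is the maximum degree of G. -/
import Mathlib


open SimpleGraph

/-- A greedy `k`-coloring of `G`: a partition of the vertex set into nonempty stable sets
`S 0, …, S (k-1)` such that for all `j < i`, every vertex of `S i` has a neighbor in `S j`. -/
def IsGreedyColoring {V : Type*} (G : SimpleGraph V) (k : ℕ) (S : Fin k → Set V) : Prop :=
  (∀ v : V, ∃! i, v ∈ S i) ∧
  (∀ i, (S i).Nonempty) ∧
  (∀ i, ∀ v ∈ S i, ∀ w ∈ S i, ¬ G.Adj v w) ∧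
  (∀ i j : Fin k, j < i → ∀ v ∈ S i, ∃ w ∈ S j, G.Adj v w)

/-- The Grundy number `Γ(G)`: the largest `k` such that `G` has a greedy `k`-coloring. -/
noncomputable def grundy {V : Type*} [Fintype V] (G : SimpleGraph V) : ℕ :=
  sSup {k | ∃ S : Fin k → Set V, IsGreedyColoring G k S}

/-- Maximum degree `Δ(G)`. -/
noncomputable def maxDeg {V : Type*} [Fintype V] (G : SimpleGraph V) : ℕ :=
  Finset.univ.sup fun v => (G.neighborSet v).ncard

section Aux
variable {V : Type*} [Fintype V] {H : SimpleGraph V}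

lemma greedy_card_le {k : ℕ} {S : Fin k → Set V} (h : IsGreedyColoring H k S) :
    k ≤ Fintype.card V := by
  have hr : ∀ i : Fin k, ∃ v, v ∈ S i := fun i => h.2.1 i
  choose r hr using hr
  have hinj : Function.Injective r := by
    intro i j hij
    exact ((h.1 (r i)).unique (hr i) (by rw [hij]; exact hr j)).symm ▸ rfl
  simpa using Fintype.card_le_of_injective r hinj

lemma bddAbove_grundySet :
    BddAbove {k | ∃ S : Fin k → Set V, IsGreedyColoring H k S} :=
  ⟨Fintype.card V, fun _ hk => hk.elim fun _ hS => greedy_card_le hS⟩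

lemma le_grundy_of_fn [Nonempty V] (f : V → ℕ)
    (hprop : ∀ v w, H.Adj v w → f v ≠ f w)
    (hdom : ∀ v, ∀ j < f v, ∃ w, H.Adj v w ∧ f w = j)
    (m : ℕ) (v₁ : V) (hm : m ≤ f v₁) : m + 1 ≤ grundy H := by
  classical
  obtain ⟨v₀, -, hv₀⟩ := Finset.exists_mem_eq_sup Finset.univ Finset.univ_nonempty f
  set Mx := Finset.univ.sup f with hMx
  have hle : ∀ v, f v ≤ Mx := fun v => Finset.le_sup (Finset.mem_univ v)
  have hgc : IsGreedyColoring H (Mx + 1) (fun i => {v | f v = (i : ℕ)}) := by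
    refine ⟨?_, ?_, ?_, ?_⟩
    · intro v
      refine ⟨⟨f v, by have := hle v; omega⟩, rfl, ?_⟩
      intro j hj
      exact Fin.ext (by simpa using hj.symm)
    · intro i
      rcases Nat.lt_or_ge (i : ℕ) (f v₀) with h | h
      · obtain ⟨w, -, hw⟩ := hdom v₀ i h
        exact ⟨w, hw⟩
      · have hiv : (i : ℕ) = f v₀ := by
          have h2 := i.isLt
          omega
        exact ⟨v₀, hiv.symm⟩
    · intro i v hv w hw hadj
      exact hprop v w hadj (hv.trans hw.symm)
    · intro i j hji v hv
      obtain ⟨w, hadj, hw⟩ := hdom v j (by simp only [Set.mem_setOf_eq] at hv; rw [hv]; exact hji)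
      exact ⟨w, hw, hadj⟩
  have h1 : Mx + 1 ≤ grundy H := le_csSup bddAbove_grundySet ⟨_, hgc⟩
  have := hle v₁
  omega

end Aux

section FF
variable {V : Type*} [Fintype V]

noncomputable def rnk {V : Type*} [Fintype V] (v : V) : ℕ := ((Fintype.equivFin V) v : ℕ)

lemma rnk_inj {v w : V} (h : rnk v = rnk w) : v = w :=
  (Fintype.equivFin V).injective (Fin.val_injective h)

open Classical in
noncomputable def ffit (H : SimpleGraph V) (t : ℕ) (W : Fin t → Set V) (v : V) : ℕ :=
  if h : ∃ i, v ∈ W i then (h.choose : ℕ)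
  else sInf {c : ℕ |
    (∀ i : Fin t, ∀ w, w ∈ W i → H.Adj v w → (i : ℕ) ≠ c) ∧
    (∀ w, H.Adj v w → (¬ ∃ i, w ∈ W i) → rnk w < rnk v → ffit H t W w ≠ c)}
termination_by rnk v
decreasing_by assumption

variable {H : SimpleGraph V} {t : ℕ} {W : Fin t → Set V}

lemma ffit_base (hdisj : ∀ i j v, v ∈ W i → v ∈ W j → i = j)
    {v : V} {i : Fin t} (hv : v ∈ W i) : ffit H t W v = i := by
  have h : ∃ i, v ∈ W i := ⟨i, hv⟩
  conv_lhs => rw [ffit]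
  rw [dif_pos h]
  exact congrArg _ (hdisj _ _ _ h.choose_spec hv)

lemma ffit_eq_sInf {v : V} (hv : ¬ ∃ i, v ∈ W i) :
    ffit H t W v = sInf {c : ℕ |
      (∀ i : Fin t, ∀ w, w ∈ W i → H.Adj v w → (i : ℕ) ≠ c) ∧
      (∀ w, H.Adj v w → (¬ ∃ i, w ∈ W i) → rnk w < rnk v → ffit H t W w ≠ c)} := by
  conv_lhs => rw [ffit]
  rw [dif_neg hv]

lemma ffit_set_nonempty (v : V) :
    {c : ℕ |
      (∀ i : Fin t, ∀ w, w ∈ W i → H.Adj v w → (i : ℕ) ≠ c) ∧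
      (∀ w, H.Adj v w → (¬ ∃ i, w ∈ W i) → rnk w < rnk v → ffit H t W w ≠ c)}.Nonempty := by
  classical
  refine ⟨max t ((Finset.univ.sup (ffit H t W)) + 1), ?_, ?_⟩
  · intro i w _ _
    have : (i : ℕ) < t := i.isLt
    have := le_max_left t ((Finset.univ.sup (ffit H t W)) + 1)
    omega
  · intro w _ _ _
    have h1 : ffit H t W w ≤ Finset.univ.sup (ffit H t W) := Finset.le_sup (Finset.mem_univ w)
    have := le_max_right t ((Finset.univ.sup (ffit H t W)) + 1)
    omega

lemma ffit_spec {v : V} (hv : ¬ ∃ i, v ∈ W i) :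
    (∀ i : Fin t, ∀ w, w ∈ W i → H.Adj v w → (i : ℕ) ≠ ffit H t W v) ∧
    (∀ w, H.Adj v w → (¬ ∃ i, w ∈ W i) → rnk w < rnk v → ffit H t W w ≠ ffit H t W v) := by
  have h := Nat.sInf_mem (ffit_set_nonempty (H := H) (W := W) v)
  rw [← ffit_eq_sInf hv] at h
  exact h

lemma ffit_prop (hdisj : ∀ i j v, v ∈ W i → v ∈ W j → i = j)
    (hstab : ∀ i, ∀ v ∈ W i, ∀ w ∈ W i, ¬ H.Adj v w) :
    ∀ v w, H.Adj v w → ffit H t W v ≠ ffit H t W w := by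
  intro v w hadj
  by_cases hv : ∃ i, v ∈ W i <;> by_cases hw : ∃ i, w ∈ W i
  · obtain ⟨i, hvi⟩ := hv
    obtain ⟨j, hwj⟩ := hw
    rw [ffit_base hdisj hvi, ffit_base hdisj hwj]
    intro hval
    have : i = j := Fin.ext hval
    exact hstab i v hvi w (this ▸ hwj) hadj
  · obtain ⟨i, hvi⟩ := hv
    rw [ffit_base hdisj hvi]
    exact (ffit_spec hw).1 i v hvi hadj.symm
  · obtain ⟨j, hwj⟩ := hw
    rw [ffit_base hdisj hwj]
    exact Ne.symm ((ffit_spec hv).1 j w hwj hadj)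
  · have hne : v ≠ w := H.ne_of_adj hadj
    have hrne : rnk v ≠ rnk w := fun h => hne (rnk_inj h)
    rcases lt_or_gt_of_ne hrne with hlt | hlt
    · exact (ffit_spec hw).2 v hadj.symm hv hlt
    · exact Ne.symm ((ffit_spec hv).2 w hadj hw hlt)

lemma ffit_dom (hdisj : ∀ i j v, v ∈ W i → v ∈ W j → i = j)
    (hdomW : ∀ i j : Fin t, j < i → ∀ v ∈ W i, ∃ w ∈ W j, H.Adj v w) :
    ∀ v, ∀ j < ffit H t W v, ∃ w, H.Adj v w ∧ ffit H t W w = j := by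
  intro v j hj
  by_cases hv : ∃ i, v ∈ W i
  · obtain ⟨i, hvi⟩ := hv
    rw [ffit_base hdisj hvi] at hj
    have hjt : j < t := hj.trans i.isLt
    obtain ⟨w, hwj, hadj⟩ := hdomW i ⟨j, hjt⟩ hj v hvi
    exact ⟨w, hadj, by rw [ffit_base hdisj hwj]⟩
  · rw [ffit_eq_sInf hv] at hj
    have hnm := Nat.notMem_of_lt_sInf hj
    simp only [Set.mem_setOf_eq, not_and_or, not_forall] at hnm
    rcases hnm with ⟨i, w, hwi, hadj, hne⟩ | ⟨w, hadj, hwb, hlt, hne⟩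
    · push_neg at hne
      exact ⟨w, hadj, by rw [ffit_base hdisj hwi]; exact hne⟩
    · push_neg at hne
      exact ⟨w, hadj, hne⟩

lemma le_grundy_of_subWitness (H : SimpleGraph V) (t : ℕ) (W : Fin t → Set V)
    (hne : ∀ i, (W i).Nonempty)
    (hdisj : ∀ i j v, v ∈ W i → v ∈ W j → i = j)
    (hstab : ∀ i, ∀ v ∈ W i, ∀ w ∈ W i, ¬ H.Adj v w)
    (hdomW : ∀ i j : Fin t, j < i → ∀ v ∈ W i, ∃ w ∈ W j, H.Adj v w) :
    t ≤ grundy H := by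
  rcases Nat.eq_zero_or_pos t with rfl | ht
  · exact Nat.zero_le _
  obtain ⟨v₁, hv₁⟩ := hne ⟨t - 1, by omega⟩
  haveI : Nonempty V := ⟨v₁⟩
  have hval : ffit H t W v₁ = t - 1 := ffit_base hdisj hv₁
  have h := le_grundy_of_fn (H := H) (ffit H t W) (ffit_prop hdisj hstab)
    (ffit_dom hdisj hdomW) (t - 1) v₁ (le_of_eq hval.symm)
  omega

end FF

lemma build {β : Type*} [Fintype β] (H : SimpleGraph β) (D : ℕ) (cc : β → ℕ)
    (mset : β → Finset ℕ)
    (hmcard : ∀ x, (mset x).card ≤ D)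
    (hcdom : ∀ x, ∀ j, j < cc x → j ∉ mset x → ∃ y, H.Adj x y ∧ cc y = j) :
    ∀ (s : ℕ) (R : Finset β) (F : Finset ℕ) (dm : ℕ),
      R.Nonempty → (∀ y ∈ R, mset y ⊆ F) → (∀ y ∈ R, dm ≤ cc y) →
      s + D * R.card * (2 ^ (s - 1) - 1) ≤ ((Finset.range dm) \ F).card →
      ∃ (W : Fin s → Finset β) (d : Fin s → ℕ),
        (∀ i, (W i).Nonempty) ∧
        (∀ i, ∀ y ∈ W i, cc y = d i) ∧
        (∀ i j : Fin s, i < j → d i < d j) ∧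
        (∀ i, d i < dm) ∧
        (∀ y ∈ R, ∀ i, ∃ z ∈ W i, H.Adj y z) ∧
        (∀ i j : Fin s, j < i → ∀ y ∈ W i, ∃ z ∈ W j, H.Adj y z) := by
  intro s
  induction s with
  | zero =>
    intro R F dm _ _ _ _
    exact ⟨Fin.elim0, Fin.elim0, fun i => i.elim0, fun i => i.elim0, fun i => i.elim0,
      fun i => i.elim0, fun y _ i => i.elim0, fun i => i.elim0⟩
  | succ s ih =>
    intro R F dm hRne hmF hdm hcard
    classical
    set A := Finset.range dm \ F with hA
    have hAne : A.Nonempty := by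
      rw [← Finset.card_pos]
      omega
    set dt := A.max' hAne with hdt
    have hdtA : dt ∈ A := A.max'_mem hAne
    have hdtdm : dt < dm := by
      have := (Finset.mem_sdiff.mp hdtA).1
      exact Finset.mem_range.mp this
    have hdtF : dt ∉ F := (Finset.mem_sdiff.mp hdtA).2
    have hch : ∀ y ∈ R, ∃ z, H.Adj y z ∧ cc z = dt := by
      intro y hy
      exact hcdom y dt (lt_of_lt_of_le hdtdm (hdm y hy)) (fun hmem => hdtF (hmF y hy hmem))
    choose! f hf1 hf2 using hch
    set Wt := R.image f with hWt
    set F' := F ∪ Wt.biUnion mset with hF'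
    set R' := R ∪ Wt with hR'
    have hWtcard : Wt.card ≤ R.card := Finset.card_image_le
    have hR'card : R'.card ≤ 2 * R.card := by
      have h := Finset.card_union_le R Wt
      rw [← hR'] at h
      omega
    -- availability chain
    have hsub : A ⊆ insert dt (Finset.range dt \ F) := by
      intro x hx
      rcases eq_or_ne x dt with rfl | hne
      · exact Finset.mem_insert_self _ _
      · have hle := A.le_max' x hx
        have hx' := Finset.mem_sdiff.mp hx
        refine Finset.mem_insert_of_mem (Finset.mem_sdiff.mpr ⟨Finset.mem_range.mpr ?_, hx'.2⟩)
        omega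
    have h1 : A.card ≤ (Finset.range dt \ F).card + 1 := by
      have := Finset.card_le_card hsub
      have := Finset.card_insert_le dt (Finset.range dt \ F)
      omega
    have h2 : (Finset.range dt \ F).card ≤ (Finset.range dt \ F').card + (Wt.biUnion mset).card := by
      have heq : Finset.range dt \ F' = (Finset.range dt \ F) \ (Wt.biUnion mset) := by
        ext x
        simp only [hF', Finset.mem_sdiff, Finset.mem_union]
        tauto
      rw [heq]
      exact Finset.card_le_card_sdiff_add_card
    have h3 : (Wt.biUnion mset).card ≤ D * R.card := by
      calc (Wt.biUnion mset).card ≤ ∑ z ∈ Wt, (mset z).card := Finset.card_biUnion_le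
        _ ≤ ∑ _z ∈ Wt, D := Finset.sum_le_sum (fun z _ => hmcard z)
        _ = Wt.card * D := by rw [Finset.sum_const, smul_eq_mul]
        _ ≤ R.card * D := Nat.mul_le_mul_right D hWtcard
        _ = D * R.card := Nat.mul_comm _ _
    have hpre : s + D * R'.card * (2 ^ (s - 1) - 1) ≤ ((Finset.range dt) \ F').card := by
      rcases Nat.eq_zero_or_pos s with rfl | hs
      · simp
      · have hp : 1 ≤ 2 ^ (s - 1) := Nat.one_le_two_pow
        have hps : 2 ^ s = 2 * 2 ^ (s - 1) := by
          conv_lhs => rw [show s = (s - 1) + 1 by omega]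
          rw [pow_succ]
          ring
        set p := 2 ^ (s - 1) with hpdef
        -- hcard : (s+1) + D * R.card * (2 ^ s - 1) ≤ A.card
        have hcard' : (s + 1) + D * R.card * (2 * p - 1) ≤ A.card := by
          rw [Nat.succ_sub_one] at hcard
          rw [← hps]; exact hcard
        have hsplit : D * R.card * (2 * p - 1) = 2 * (D * R.card * (p - 1)) + D * R.card := by
          have : 2 * p - 1 = 2 * (p - 1) + 1 := by omega
          rw [this]; ring
        have hmul : D * R'.card * (p - 1) ≤ 2 * (D * R.card * (p - 1)) := by
          calc D * R'.card * (p - 1) ≤ D * (2 * R.card) * (p - 1) :=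
                Nat.mul_le_mul_right _ (Nat.mul_le_mul_left _ hR'card)
            _ = 2 * (D * R.card * (p - 1)) := by ring
        omega
    have hR'ne : R'.Nonempty := hRne.mono Finset.subset_union_left
    have hmF' : ∀ y ∈ R', mset y ⊆ F' := by
      intro y hy
      rcases Finset.mem_union.mp hy with hy | hy
      · exact (hmF y hy).trans Finset.subset_union_left
      · exact (Finset.subset_biUnion_of_mem mset hy).trans Finset.subset_union_right
    have hdm' : ∀ y ∈ R', dt ≤ cc y := by
      intro y hy
      rcases Finset.mem_union.mp hy with hy | hy
      · exact le_of_lt (lt_of_lt_of_le hdtdm (hdm y hy))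
      · obtain ⟨y₀, hy₀, rfl⟩ := Finset.mem_image.mp hy
        exact le_of_eq (hf2 y₀ hy₀).symm
    obtain ⟨W', d', p1, p2, p3, p4, p5, p6⟩ := ih R' F' dt hR'ne hmF' hdm' hpre
    refine ⟨Fin.snoc W' Wt, Fin.snoc d' dt, ?_, ?_, ?_, ?_, ?_, ?_⟩
    · intro i
      rcases Fin.eq_castSucc_or_eq_last i with ⟨i', rfl⟩ | rfl
      · simpa using p1 i'
      · rw [Fin.snoc_last]
        exact hWt ▸ hRne.image f
    · intro i y hy
      rcases Fin.eq_castSucc_or_eq_last i with ⟨i', rfl⟩ | rfl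
      · simp only [Fin.snoc_castSucc] at hy ⊢
        exact p2 i' y hy
      · simp only [Fin.snoc_last] at hy ⊢
        obtain ⟨y₀, hy₀, rfl⟩ := Finset.mem_image.mp hy
        exact hf2 y₀ hy₀
    · intro i j hij
      rcases Fin.eq_castSucc_or_eq_last j with ⟨j', rfl⟩ | rfl
      · rcases Fin.eq_castSucc_or_eq_last i with ⟨i', rfl⟩ | rfl
        · simp only [Fin.snoc_castSucc]
          exact p3 i' j' (by exact_mod_cast hij)
        · exact absurd hij (Fin.castSucc_lt_last j').asymm
      · rcases Fin.eq_castSucc_or_eq_last i with ⟨i', rfl⟩ | rfl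
        · simp only [Fin.snoc_castSucc, Fin.snoc_last]
          exact p4 i'
        · exact absurd hij (lt_irrefl _)
    · intro i
      rcases Fin.eq_castSucc_or_eq_last i with ⟨i', rfl⟩ | rfl
      · simp only [Fin.snoc_castSucc]
        exact lt_trans (p4 i') hdtdm
      · simpa using hdtdm
    · intro y hy i
      rcases Fin.eq_castSucc_or_eq_last i with ⟨i', rfl⟩ | rfl
      · simp only [Fin.snoc_castSucc]
        exact p5 y (Finset.mem_union_left _ hy) i'
      · simp only [Fin.snoc_last]
        exact ⟨f y, Finset.mem_image_of_mem f hy, hf1 y hy⟩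
    · intro i j hji y hy
      rcases Fin.eq_castSucc_or_eq_last i with ⟨i', rfl⟩ | rfl
      · rcases Fin.eq_castSucc_or_eq_last j with ⟨j', rfl⟩ | rfl
        · simp only [Fin.snoc_castSucc] at hy ⊢
          exact p6 i' j' (by exact_mod_cast hji) y hy
        · exact absurd hji (Fin.castSucc_lt_last i').asymm
      · simp only [Fin.snoc_last] at hy
        rcases Fin.eq_castSucc_or_eq_last j with ⟨j', rfl⟩ | rfl
        · simp only [Fin.snoc_castSucc]
          exact p5 y (Finset.mem_union_right _ hy) j'
        · exact absurd hji (lt_irrefl _)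

lemma key {α β : Type*} [Fintype α] [Fintype β] [Nonempty β]
    (G : SimpleGraph α) (H : SimpleGraph β)
    (k : ℕ) (S : Fin k → Set (α × β)) (hS : IsGreedyColoring (G.boxProd H) k S) :
    k ≤ maxDeg G * 2 ^ (grundy H - 1) + grundy H := by
  classical
  obtain ⟨hpart, hnecl, hstab, hdom⟩ := hS
  by_contra hk
  push_neg at hk
  have hk1 : 1 ≤ k := by omega
  have hidx : ∀ v : α × β, ∃ i, v ∈ S i := fun v => (hpart v).exists
  set idx : α × β → Fin k := fun v => (hidx v).choose with hidxdef
  have hmem : ∀ v, v ∈ S (idx v) := fun v => (hidx v).choose_spec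
  have huniq : ∀ v i, v ∈ S i → idx v = i := by
    intro v i hv
    obtain ⟨i₀, hi₀, hu⟩ := hpart v
    rw [hu _ (hmem v), hu _ hv]
  set c : α × β → ℕ := fun v => (idx v : ℕ) with hcdef
  have hcprop : ∀ v w, (G.boxProd H).Adj v w → c v ≠ c w := by
    intro v w hadj heq
    have : idx v = idx w := Fin.ext heq
    exact hstab (idx v) v (hmem v) w (this ▸ hmem w) hadj
  have hcdom : ∀ v j, j < c v → ∃ w, (G.boxProd H).Adj v w ∧ c w = j := by
    intro v j hj
    have hjk : j < k := hj.trans (idx v).isLt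
    obtain ⟨w, hw, hadj⟩ := hdom (idx v) ⟨j, hjk⟩ hj v (hmem v)
    exact ⟨w, hadj, by rw [hcdef]; simp only; rw [huniq w _ hw]⟩
  obtain ⟨u₀, hu₀⟩ := hnecl ⟨k - 1, by omega⟩
  set a := u₀.1 with ha
  set x₀ := u₀.2 with hx₀
  have hcu₀ : c u₀ = k - 1 := by
    rw [hcdef]; simp only; rw [huniq u₀ _ hu₀]
  set cc : β → ℕ := fun x => c (a, x) with hcc
  set nbrF : Finset α := (G.neighborSet a).toFinite.toFinset with hnbrF
  set mset : β → Finset ℕ := fun x => nbrF.image (fun b => c (b, x)) with hmset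
  set D := maxDeg G with hD
  have hmcard : ∀ x, (mset x).card ≤ D := by
    intro x
    calc (mset x).card ≤ nbrF.card := Finset.card_image_le
      _ = (G.neighborSet a).ncard := (Set.ncard_eq_toFinset_card _ _).symm
      _ ≤ D := by
        rw [hD, maxDeg]
        exact Finset.le_sup (f := fun v => (G.neighborSet v).ncard) (Finset.mem_univ a)
  have hccdom : ∀ x j, j < cc x → j ∉ mset x → ∃ y, H.Adj x y ∧ cc y = j := by
    intro x j hj hnm
    obtain ⟨w, hadj, hcw⟩ := hcdom (a, x) j hj
    rw [boxProd_adj] at hadj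
    rcases hadj with ⟨hG, heq⟩ | ⟨hH, heq⟩
    · exfalso
      apply hnm
      rw [hmset]
      simp only
      refine Finset.mem_image.mpr ⟨w.1, ?_, ?_⟩
      · rw [hnbrF]
        simp [Set.Finite.mem_toFinset]
        exact hG
      · rw [← hcw]
        congr 1
        exact Prod.ext rfl heq
    · refine ⟨w.2, hH, ?_⟩
      rw [hcc]
      simp only
      rw [← hcw]
      congr 1
      exact Prod.ext heq rfl
  set Γ := grundy H with hΓ
  have hΓ1 : 1 ≤ Γ := by
    have := le_grundy_of_subWitness H 1 (fun _ => {Classical.arbitrary β})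
      (fun _ => ⟨_, rfl⟩)
      (fun i j v _ _ => Subsingleton.elim i j)
      (by rintro i v rfl w rfl hadj; exact H.irrefl hadj)
      (fun i j hji => absurd hji (by omega))
    exact this
  have hcx₀ : cc x₀ = k - 1 := by
    rw [hcc]; simp only
    rw [ha, hx₀]
    simpa using hcu₀
  have hp1 : 1 ≤ 2 ^ (Γ - 1) := Nat.one_le_two_pow
  have hpre : Γ + D * ({x₀} : Finset β).card * (2 ^ (Γ - 1) - 1) ≤
      ((Finset.range (k - 1)) \ mset x₀).card := by
    have h1 : (k - 1) ≤ ((Finset.range (k - 1)) \ mset x₀).card + (mset x₀).card := by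
      have := Finset.card_le_card_sdiff_add_card (s := Finset.range (k - 1)) (t := mset x₀)
      simpa using this
    have h2 := hmcard x₀
    rw [Finset.card_singleton]
    set p := 2 ^ (Γ - 1) with hpdef
    have hmulsub : D * 1 * (p - 1) + D = D * p := by
      have : D * 1 * (p - 1) = D * (p - 1) := by ring
      rw [this, ← Nat.mul_succ]
      congr 1
      omega
    -- hk : D * p + Γ < k
    omega
  obtain ⟨W, d, p1, p2, p3, p4, p5, p6⟩ := build H D cc mset hmcard hccdom Γ {x₀}
    (mset x₀) (k - 1) ⟨x₀, Finset.mem_singleton_self x₀⟩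
    (by intro y hy; rw [Finset.mem_singleton] at hy; rw [hy])
    (by intro y hy; rw [Finset.mem_singleton] at hy; rw [hy, hcx₀])
    hpre
  -- assemble the (Γ+1)-witness
  set V : Fin (Γ + 1) → Set β := Fin.snoc (fun i => (W i : Set β)) {x₀} with hV
  set col : Fin (Γ + 1) → ℕ := Fin.snoc d (k - 1) with hcol
  have hcolmem : ∀ i y, y ∈ V i → cc y = col i := by
    intro i y hy
    rcases Fin.eq_castSucc_or_eq_last i with ⟨i', rfl⟩ | rfl
    · rw [hV] at hy
      simp only [Fin.snoc_castSucc, Finset.mem_coe] at hy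
      rw [hcol]
      simp only [Fin.snoc_castSucc]
      exact p2 i' y hy
    · rw [hV] at hy
      simp only [Fin.snoc_last, Set.mem_singleton_iff] at hy
      rw [hcol]
      simp only [Fin.snoc_last]
      rw [hy, hcx₀]
  have hcolmono : ∀ i j : Fin (Γ + 1), i < j → col i < col j := by
    intro i j hij
    rcases Fin.eq_castSucc_or_eq_last j with ⟨j', rfl⟩ | rfl
    · rcases Fin.eq_castSucc_or_eq_last i with ⟨i', rfl⟩ | rfl
      · rw [hcol]; simp only [Fin.snoc_castSucc]
        exact p3 i' j' (by exact_mod_cast hij)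
      · exact absurd hij (Fin.castSucc_lt_last j').asymm
    · rcases Fin.eq_castSucc_or_eq_last i with ⟨i', rfl⟩ | rfl
      · rw [hcol]; simp only [Fin.snoc_castSucc, Fin.snoc_last]
        have := p4 i'
        omega
      · exact absurd hij (lt_irrefl _)
  have hVne : ∀ i, (V i).Nonempty := by
    intro i
    rcases Fin.eq_castSucc_or_eq_last i with ⟨i', rfl⟩ | rfl
    · rw [hV]; simp only [Fin.snoc_castSucc]
      exact Finset.coe_nonempty.mpr (p1 i')
    · rw [hV]; simp only [Fin.snoc_last]
      exact Set.singleton_nonempty x₀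
  have hVdisj : ∀ i j v, v ∈ V i → v ∈ V j → i = j := by
    intro i j v hvi hvj
    by_contra hne
    rcases lt_or_gt_of_ne hne with h | h
    · have := hcolmono i j h
      rw [← hcolmem i v hvi, ← hcolmem j v hvj] at this
      omega
    · have := hcolmono j i h
      rw [← hcolmem i v hvi, ← hcolmem j v hvj] at this
      omega
  have hVstab : ∀ i, ∀ v ∈ V i, ∀ w ∈ V i, ¬ H.Adj v w := by
    intro i v hv w hw hadj
    have hprod : (G.boxProd H).Adj (a, v) (a, w) := by
      rw [boxProd_adj]; exact Or.inr ⟨hadj, rfl⟩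
    have h1 : cc v = col i := hcolmem i v hv
    have h2 : cc w = col i := hcolmem i w hw
    exact hcprop (a, v) (a, w) hprod (h1.trans h2.symm)
  have hVdom : ∀ i j : Fin (Γ + 1), j < i → ∀ v ∈ V i, ∃ w ∈ V j, H.Adj v w := by
    intro i j hji v hv
    rcases Fin.eq_castSucc_or_eq_last i with ⟨i', rfl⟩ | rfl
    · rcases Fin.eq_castSucc_or_eq_last j with ⟨j', rfl⟩ | rfl
      · rw [hV] at hv ⊢
        simp only [Fin.snoc_castSucc, Finset.mem_coe] at hv ⊢
        exact p6 i' j' (by exact_mod_cast hji) v hv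
      · exact absurd hji (Fin.castSucc_lt_last i').asymm
    · rcases Fin.eq_castSucc_or_eq_last j with ⟨j', rfl⟩ | rfl
      · rw [hV] at hv ⊢
        simp only [Fin.snoc_last, Set.mem_singleton_iff] at hv
        simp only [Fin.snoc_castSucc, Finset.mem_coe]
        rw [hv]
        exact p5 x₀ (Finset.mem_singleton_self x₀) j'
      · exact absurd hji (lt_irrefl _)
  have hfinal : Γ + 1 ≤ Γ :=
    le_grundy_of_subWitness H (Γ + 1) V hVne hVdisj hVstab hVdom
  omega

/-- For a finite graph `G` and a finite nonempty graph `H`,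
`Γ(G □ H) ≤ Δ(G) · 2^(Γ(H)−1) + Γ(H)`. -/
theorem grundy_boxProd_le {α β : Type*} [Fintype α] [Fintype β] [Nonempty β]
    (G : SimpleGraph α) (H : SimpleGraph β) :
    grundy (G.boxProd H) ≤ maxDeg G * 2 ^ (grundy H - 1) + grundy H := by

  apply csSup_le'
  rintro k ⟨S, hS⟩
  exact key G H k S hS
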